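/- Let A be an n×n real matrix, B an m×m real matrix, x ∈ ℝⁿ, and λ ∈ ℝ. If A x = λ x and the entries of x sum to zero (1ₙᵀ x = 0), then (A ⋄ B)(x ⊗ 1ₘ) = m λ (x ⊗ 1ₘ), where 1ₖ denotes the all-ones vector of length k. -/
import Mathlib


open Matrix Kronecker

/-- The `k × k` all-ones matrix `J_k`. -/
def onesMat (k : ℕ) : Matrix (Fin k) (Fin k) ℝ := Matrix.of fun _ _ => 1

/-- The additive Kronecker analogue `A ⋄ B = A ⊗ J_m + J_n ⊗ B`. -/
def diamond {n m : ℕ} (A : Matrix (Fin n) (Fin n) ℝ) (B : Matrix (Fin m) (Fin m) ℝ) :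
    Matrix (Fin n × Fin m) (Fin n × Fin m) ℝ :=
  A ⊗ₖ onesMat m + onesMat n ⊗ₖ B

/-- The Kronecker product of two vectors. -/
def vecKron {n m : ℕ} (x : Fin n → ℝ) (y : Fin m → ℝ) : Fin n × Fin m → ℝ :=
  fun p => x p.1 * y p.2

/-- The all-ones vector `1_k`. -/
def onesVec (k : ℕ) : Fin k → ℝ := fun _ => 1

/-- If `A x = λ x` and the entries of `x` sum to zero, then
`(A ⋄ B)(x ⊗ 1_m) = m λ (x ⊗ 1_m)`. -/
theorem diamond_mulVec_vecKron_onesVec {n m : ℕ}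
    (A : Matrix (Fin n) (Fin n) ℝ) (B : Matrix (Fin m) (Fin m) ℝ)
    (x : Fin n → ℝ) (lam : ℝ)
    (hAx : A.mulVec x = lam • x) (hx : ∑ i, x i = 0) :
    (diamond A B).mulVec (vecKron x (onesVec m)) =
      ((m : ℝ) * lam) • vecKron x (onesVec m) := by
  funext p
  obtain ⟨i, j⟩ := p
  have hAi : ∑ k, A i k * x k = lam * x i := by
    have := congrFun hAx i
    simpa [Matrix.mulVec, dotProduct] using this
  simp only [diamond, Matrix.mulVec, dotProduct, Matrix.add_apply,
    Matrix.kroneckerMap_apply, onesMat, onesVec, vecKron, Matrix.of_apply,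
    Pi.smul_apply, smul_eq_mul, Fintype.sum_prod_type]
  simp only [mul_one, one_mul]
  have : ∀ k : Fin n, ∑ l : Fin m, (A i k + B j l) * x k
      = (m : ℝ) * (A i k * x k) + (∑ l, B j l) * x k := by
    intro k
    simp [add_mul, Finset.sum_add_distrib, Finset.sum_const, nsmul_eq_mul,
      Finset.sum_mul, mul_assoc]
  rw [Finset.sum_congr rfl fun k _ => this k, Finset.sum_add_distrib,
    ← Finset.mul_sum, hAi, ← Finset.mul_sum, hx]
  ring
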